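/- Let OPT > 0 and φ₀ ≥ 1 be real numbers, let p be a natural number, and let c₁,...,c_p be nonnegative reals with c_j ≤ 2·OPT for each j. Define φ_i recursively by φ_i = φ_{i-1}·(1 - c_i/(2·OPT)) and suppose φ_p ≥ 1. Then Σ_{j=1}^p c_j ≤ 2·ln(φ₀)·OPT. -/

import Mathlib

theorem greedy_total_cost_bound (OPT φ₀ : ℝ) (hOPT : 0 < OPT) (hφ₀ : 1 ≤ φ₀)
    (p : ℕ) (c : ℕ → ℝ)
    (hc : ∀ j, 1 ≤ j → j ≤ p → 0 ≤ c j ∧ c j ≤ 2 * OPT)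
    (φ : ℕ → ℝ) (hφ0 : φ 0 = φ₀)
    (hrec : ∀ i, 1 ≤ i → i ≤ p → φ i = φ (i - 1) * (1 - c i / (2 * OPT)))
    (hφp : 1 ≤ φ p) :
    ∑ j ∈ Finset.Icc 1 p, c j ≤ 2 * Real.log φ₀ * OPT := by
  have h2 : (0:ℝ) < 2 * OPT := by linarith
  -- positivity of φ i for i ≤ p, by backward induction
  have hposk : ∀ k, k ≤ p → 0 < φ (p - k) := by
    intro k
    induction k with
    | zero => intro _; simpa using lt_of_lt_of_le one_pos hφp
    | succ k ih =>
      intro hk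
      have hk' : k ≤ p := Nat.le_of_succ_le hk
      have hpk : 0 < φ (p - k) := ih hk'
      have h1 : 1 ≤ p - k := Nat.le_sub_of_add_le (by omega)
      have h2' : p - k ≤ p := Nat.sub_le _ _
      have hr := hrec (p - k) h1 h2'
      have hc' := hc (p - k) h1 h2'
      have hfle : 1 - c (p - k) / (2 * OPT) ≤ 1 := by
        have : 0 ≤ c (p - k) / (2 * OPT) := div_nonneg hc'.1 (le_of_lt h2)
        linarith
      have hfnn : 0 ≤ 1 - c (p - k) / (2 * OPT) := by
        have : c (p - k) / (2 * OPT) ≤ 1 := (div_le_one h2).mpr hc'.2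
        linarith
      have hpk1 : p - k - 1 = p - (k + 1) := by omega
      rw [hpk1] at hr
      rcases lt_or_eq_of_le hfnn with hf | hf
      · have : 0 < φ (p - (k + 1)) := by
          by_contra hle
          push_neg at hle
          have : φ (p - k) ≤ 0 := by
            rw [hr]; exact mul_nonpos_of_nonpos_of_nonneg hle (le_of_lt hf)
          linarith
        exact this
      · exfalso
        rw [hr, ← hf, mul_zero] at hpk
        exact lt_irrefl 0 hpk
  have hpos : ∀ i, i ≤ p → 0 < φ i := by
    intro i hi
    have := hposk (p - i) (Nat.sub_le _ _)
    rwa [Nat.sub_sub_self hi] at this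
  -- main telescoping bound
  have key : ∀ i, i ≤ p →
      ∑ j ∈ Finset.Icc 1 i, c j ≤ 2 * OPT * (Real.log φ₀ - Real.log (φ i)) := by
    intro i
    induction i with
    | zero => intro _; simp [hφ0]
    | succ i ih =>
      intro hi
      have hi' : i ≤ p := Nat.le_of_succ_le hi
      have hφi := hpos i hi'
      have hφi1 := hpos (i + 1) hi
      have hr := hrec (i + 1) (Nat.le_add_left 1 i) hi
      simp only [Nat.add_sub_cancel] at hr
      have hc' := hc (i + 1) (Nat.le_add_left 1 i) hi
      set y := 1 - c (i + 1) / (2 * OPT) with hy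
      have hyp : 0 < y := by
        by_contra hle
        push_neg at hle
        have : φ (i + 1) ≤ 0 := by
          rw [hr]; exact mul_nonpos_of_nonneg_of_nonpos (le_of_lt hφi) hle
        linarith
      have hlog : Real.log (φ (i + 1)) = Real.log (φ i) + Real.log y := by
        rw [hr, Real.log_mul (ne_of_gt hφi) (ne_of_gt hyp)]
      have hlogy : Real.log y ≤ - (c (i + 1) / (2 * OPT)) := by
        have := Real.log_le_sub_one_of_pos hyp
        rw [hy] at this ⊢
        linarith
      have hsum : ∑ j ∈ Finset.Icc 1 (i + 1), c j
          = ∑ j ∈ Finset.Icc 1 i, c j + c (i + 1) := by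
        rw [Finset.sum_Icc_succ_top (by omega)]
      rw [hsum]
      have hih := ih hi'
      have hstep : 2 * OPT * (Real.log φ₀ - Real.log (φ (i + 1)))
          = 2 * OPT * (Real.log φ₀ - Real.log (φ i)) - 2 * OPT * Real.log y := by
        rw [hlog]; ring
      rw [hstep]
      have : 2 * OPT * Real.log y ≤ - c (i + 1) := by
        have := mul_le_mul_of_nonneg_left hlogy (le_of_lt h2)
        calc 2 * OPT * Real.log y ≤ 2 * OPT * (-(c (i + 1) / (2 * OPT))) := this
          _ = - c (i + 1) := by field_simp
      linarith
  have hfin := key p le_rfl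
  have hlogp : 0 ≤ Real.log (φ p) := Real.log_nonneg hφp
  nlinarith [hfin, hlogp, h2]
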